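/- Let A be an n×n real symmetric negative definite matrix whose off-diagonal entries are all nonnegative (a_{ij} ≥ 0 for i ≠ j). If x ∈ ℝ^n satisfies (A x)_j ≥ 0 for every j, then x_j ≤ 0 for every j. -/

import Mathlib

open Matrix in


theorem negativity_lemma_matrix {n : ℕ} (A : Matrix (Fin n) (Fin n) ℝ)
    (hsymm : A.IsSymm) (hnegdef : (-A).PosDef)
    (hoff : ∀ i j, i ≠ j → 0 ≤ A i j)
    (x : Fin n → ℝ) (hx : ∀ j, 0 ≤ A.mulVec x j) :
    ∀ j, x j ≤ 0 := by
  set p : Fin n → ℝ := fun i => max (x i) 0 with hp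
  set m : Fin n → ℝ := fun i => max (-x i) 0 with hm
  have hpm : ∀ i, x i = p i - m i := by
    intro i
    simp only [hp, hm]
    rcases le_total (x i) 0 with h | h
    · rw [max_eq_right h, max_eq_left (by linarith)]; ring
    · rw [max_eq_left h, max_eq_right (by linarith)]; ring
  have hpz : ∀ i, p i * m i = 0 := by
    intro i
    simp only [hp, hm]
    rcases le_total (x i) 0 with h | h
    · rw [max_eq_right h]; ring
    · rw [max_eq_right (by linarith : -x i ≤ 0)]; ring
  have hp0 : ∀ i, 0 ≤ p i := fun i => le_max_right _ _
  have hm0 : ∀ i, 0 ≤ m i := fun i => le_max_right _ _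
  have key : p = 0 := by
    by_contra hne
    have hpos := hnegdef.dotProduct_mulVec_pos hne
    simp only [RCLike.star_def, star_trivial] at hpos
    have h1 : p ⬝ᵥ ((-A) *ᵥ p) = -(p ⬝ᵥ (A *ᵥ p)) := by
      simp [Matrix.neg_mulVec, dotProduct_neg]
    rw [h1] at hpos
    have hxp : (fun i => p i - m i) = x := by funext i; rw [hpm i]
    have h2 : p ⬝ᵥ (A *ᵥ p) = p ⬝ᵥ (A *ᵥ x) + p ⬝ᵥ (A *ᵥ m) := by
      have hsum : p = x + m := by
        funext i
        have := hpm i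
        have : p i = x i + m i := by linarith
        simpa using this
      rw [hsum, Matrix.mulVec_add, dotProduct_add]
    have h3 : 0 ≤ p ⬝ᵥ (A *ᵥ x) := by
      apply Finset.sum_nonneg
      intro i _
      exact mul_nonneg (hp0 i) (hx i)
    have h4 : 0 ≤ p ⬝ᵥ (A *ᵥ m) := by
      have : p ⬝ᵥ (A *ᵥ m) = ∑ i, ∑ j, p i * (A i j * m j) := by
        simp [dotProduct, Matrix.mulVec, Finset.mul_sum]
      rw [this]
      apply Finset.sum_nonneg
      intro i _
      apply Finset.sum_nonneg
      intro j _
      rcases eq_or_ne i j with rfl | hij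
      · have : p i * (A i i * m i) = A i i * (p i * m i) := by ring
        rw [this, hpz i, mul_zero]
      · exact mul_nonneg (hp0 i) (mul_nonneg (hoff i j hij) (hm0 j))
    linarith
  intro j
  have := congrFun key j
  simp only [hp, Pi.zero_apply] at this
  by_contra h
  push_neg at h
  rw [max_eq_left h.le] at this
  linarith [this, h]
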